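/- arXiv:2506.05619 — 3 statements merged into one kernel-verified Lean document; each statement's English description precedes it below -/
import Mathlib

section
/- Let σ be a profile over rankings of M alternatives, let r̂ be a ranking with σ_{r̂} > 0, and let r' be a ranking that improves the position of y_i without changing the relative order of the other alternatives, i.e., r'(y_i) ≤ r̂(y_i) and for all j, k ≠ i: r'(y_j) < r'(y_k) if and only if r̂(y_j) < r̂(y_k). For 0 < ε ≤ σ_{r̂}, let σ' be the profile obtained from σ by moving mass ε from r̂ to r' (σ'_{r̂} = σ_{r̂} − ε, σ'_{r'} = σ_{r'} + ε, and σ'_r = σ_r otherwise). Then Φ*(σ')(y_i) ≥ Φ*(σ)(y_i); that is, the policy Φ* is monotone. -/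
open Finset

noncomputable section

/-- A profile: a probability distribution over rankings (permutations of `Fin M`,
where `r i` is the 0-indexed position of alternative `i`, smaller is better). -/
def IsProfile (M : ℕ) (σ : Equiv.Perm (Fin M) → ℝ) : Prop :=
  (∀ r, 0 ≤ σ r) ∧ ∑ r : Equiv.Perm (Fin M), σ r = 1

/-- Induced preference function `P^σ(y_i ≻ y_j)`. -/
def Pref (M : ℕ) (σ : Equiv.Perm (Fin M) → ℝ) (i j : Fin M) : ℝ :=
  ∑ r : Equiv.Perm (Fin M), σ r * (if r i < r j then (1 : ℝ) else 0)

/-- Top-choice share `w^σ_i`. -/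
def topShare (M : ℕ) (σ : Equiv.Perm (Fin M) → ℝ) (i : Fin M) : ℝ :=
  ∑ r : Equiv.Perm (Fin M), (if (r i : ℕ) = 0 then σ r else 0)

/-- Borda score `B(y_i) = Σ_r σ_r (M − r(y_i))` (with 1-indexed ranks; here ranks
are 0-indexed, so the weight is `M − 1 − r i`). -/
def Borda (M : ℕ) (σ : Equiv.Perm (Fin M) → ℝ) (i : Fin M) : ℝ :=
  ∑ r : Equiv.Perm (Fin M), σ r * ((M : ℝ) - 1 - ((r i : ℕ) : ℝ))

/-- `u_i := min_{j ≠ i} P^σ(y_i ≻ y_j)`. -/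
def minPref (M : ℕ) (σ : Equiv.Perm (Fin M) → ℝ) (i : Fin M) : ℝ :=
  sInf {x : ℝ | ∃ j, j ≠ i ∧ x = Pref M σ i j}

/-- The policy `Φ*(σ)(y_i) := u_i / Σ_j u_j`. -/
def PhiStar (M : ℕ) (σ : Equiv.Perm (Fin M) → ℝ) (i : Fin M) : ℝ :=
  minPref M σ i / ∑ j : Fin M, minPref M σ j
lemma card_rank (M : ℕ) (r : Equiv.Perm (Fin M)) (x : Fin M) :
    (univ.filter fun k => r k < r x).card = (r x : ℕ) := by
  have h : (univ.filter fun k => r k < r x) = (Finset.Iio (r x)).map r.symm.toEmbedding := by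
    ext k
    simp only [mem_filter, mem_univ, true_and, Finset.mem_map, Finset.mem_Iio,
      Equiv.coe_toEmbedding]
    constructor
    · intro hk; exact ⟨r k, hk, r.symm_apply_apply k⟩
    · rintro ⟨v, hv, rfl⟩; simpa using hv
  rw [h, Finset.card_map, Fin.card_Iio]

lemma rank_split (M : ℕ) (r : Equiv.Perm (Fin M)) (i j : Fin M) :
    (r j : ℕ) = (univ.filter fun k => k ≠ i ∧ r k < r j).card
      + (if r i < r j then 1 else 0) := by
  classical
  have hsplit : (univ.filter fun k => r k < r j)
      = (univ.filter fun k => k ≠ i ∧ r k < r j) ∪ (univ.filter fun k => k = i ∧ r k < r j) := by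
    ext k; by_cases hk : k = i <;> simp [hk]
  have hdisj : Disjoint (univ.filter fun k => k ≠ i ∧ r k < r j)
      (univ.filter fun k => k = i ∧ r k < r j) := by
    simp only [Finset.disjoint_left, mem_filter, mem_univ, true_and]
    rintro a ⟨ha, -⟩ ⟨rfl, -⟩; exact ha rfl
  rw [← card_rank M r j, hsplit, Finset.card_union_of_disjoint hdisj]
  congr 1
  by_cases h : r i < r j
  · have : (univ.filter fun k => k = i ∧ r k < r j) = {i} := by
      ext k
      simp only [mem_filter, mem_univ, true_and, mem_singleton]
      constructor
      · rintro ⟨rfl, -⟩; rfl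
      · rintro rfl; exact ⟨rfl, h⟩
    rw [this]; simp [h]
  · have : (univ.filter fun k => k = i ∧ r k < r j) = ∅ := by
      ext k
      simp only [mem_filter, mem_univ, true_and, Finset.notMem_empty, iff_false, not_and]
      rintro rfl; exact h
    rw [this]; simp [h]

/-- key combinatorial lemma -/
lemma key_lt (M : ℕ) (i : Fin M) (rhat rnew : Equiv.Perm (Fin M))
    (himp : rnew i ≤ rhat i)
    (hoth : ∀ j k : Fin M, j ≠ i → k ≠ i → (rnew j < rnew k ↔ rhat j < rhat k))
    {j : Fin M} (hj : j ≠ i) (h : rhat i < rhat j) : rnew i < rnew j := by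
  by_contra hcon
  have hne : rnew j ≠ rnew i := fun he => hj (rnew.injective he)
  have hjlt : rnew j < rnew i := lt_of_le_of_ne (not_lt.mp hcon) hne
  have hA : (univ.filter fun k => k ≠ i ∧ rnew k < rnew j)
      = (univ.filter fun k => k ≠ i ∧ rhat k < rhat j) := by
    ext k
    simp only [mem_filter, mem_univ, true_and, and_congr_right_iff]
    intro hk
    exact hoth k j hk hj
  have h1 := rank_split M rhat i j
  have h2 := rank_split M rnew i j
  rw [if_pos h] at h1
  rw [if_neg (asymm hjlt)] at h2
  rw [hA] at h2
  -- rnew j = |A|, rhat j = |A| + 1, rnew i ≤ rhat i < rhat j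
  have hle : (rnew i : ℕ) ≤ (rhat i : ℕ) := himp
  have hlt2 : (rhat i : ℕ) < (rhat j : ℕ) := h
  have : (rnew i : ℕ) ≤ (rnew j : ℕ) := by omega
  have : (rnew j : ℕ) < (rnew i : ℕ) := hjlt
  omega

lemma pref_shift (M : ℕ) (σ σ' : Equiv.Perm (Fin M) → ℝ)
    (rhat rnew : Equiv.Perm (Fin M)) (ε : ℝ)
    (hσ' : ∀ r, σ' r = σ r + (if r = rnew then ε else 0) - (if r = rhat then ε else 0))
    (a b : Fin M) :
    Pref M σ' a b = Pref M σ a b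
      + ε * (if rnew a < rnew b then (1:ℝ) else 0)
      - ε * (if rhat a < rhat b then (1:ℝ) else 0) := by
  classical
  unfold Pref
  have key : ∀ r : Equiv.Perm (Fin M), σ' r * (if r a < r b then (1:ℝ) else 0)
      = σ r * (if r a < r b then (1:ℝ) else 0)
        + (if r = rnew then ε * (if rnew a < rnew b then (1:ℝ) else 0) else 0)
        - (if r = rhat then ε * (if rhat a < rhat b then (1:ℝ) else 0) else 0) := by
    intro r
    have e1 : (if r = rnew then ε else 0) * (if r a < r b then (1:ℝ) else 0)
        = (if r = rnew then ε * (if rnew a < rnew b then (1:ℝ) else 0) else 0) := by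
      by_cases h : r = rnew
      · subst h; simp
      · simp [h]
    have e2 : (if r = rhat then ε else 0) * (if r a < r b then (1:ℝ) else 0)
        = (if r = rhat then ε * (if rhat a < rhat b then (1:ℝ) else 0) else 0) := by
      by_cases h : r = rhat
      · subst h; simp
      · simp [h]
    rw [← e1, ← e2, hσ']
    ring
  simp only [key]
  rw [Finset.sum_sub_distrib, Finset.sum_add_distrib, Finset.sum_ite_eq' univ rnew,
    Finset.sum_ite_eq' univ rhat]
  simp

-- minPref facts
lemma minPref_set_eq (M : ℕ) (σ : Equiv.Perm (Fin M) → ℝ) (i : Fin M) :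
    {x : ℝ | ∃ j, j ≠ i ∧ x = Pref M σ i j} = (fun j => Pref M σ i j) '' {j | j ≠ i} := by
  ext x; simp [eq_comm, Set.mem_image]

lemma minPref_exists (M : ℕ) (hM : 2 ≤ M) (σ : Equiv.Perm (Fin M) → ℝ) (i : Fin M) :
    ∃ j, j ≠ i ∧ minPref M σ i = Pref M σ i j := by
  have hne : {x : ℝ | ∃ j, j ≠ i ∧ x = Pref M σ i j}.Nonempty := by
    have hcard : 1 < Fintype.card (Fin M) := by simp; omega
    obtain ⟨j, hj⟩ := Fintype.exists_ne_of_one_lt_card hcard i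
    exact ⟨Pref M σ i j, j, hj, rfl⟩
  have hfin : {x : ℝ | ∃ j, j ≠ i ∧ x = Pref M σ i j}.Finite := by
    rw [minPref_set_eq]; exact (Set.toFinite _).image _
  have hmem := hne.csInf_mem hfin
  obtain ⟨j, hj, hx⟩ := hmem
  exact ⟨j, hj, hx⟩

lemma minPref_le (M : ℕ) (σ : Equiv.Perm (Fin M) → ℝ) {i j : Fin M} (hj : j ≠ i) :
    minPref M σ i ≤ Pref M σ i j := by
  have hfin : {x : ℝ | ∃ j, j ≠ i ∧ x = Pref M σ i j}.Finite := by
    rw [minPref_set_eq]; exact (Set.toFinite _).image _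
  exact csInf_le hfin.bddBelow ⟨j, hj, rfl⟩

lemma le_minPref (M : ℕ) (hM : 2 ≤ M) (σ : Equiv.Perm (Fin M) → ℝ) (i : Fin M) {c : ℝ}
    (hc : ∀ j, j ≠ i → c ≤ Pref M σ i j) : c ≤ minPref M σ i := by
  obtain ⟨j, hj, he⟩ := minPref_exists M hM σ i
  rw [he]; exact hc j hj

lemma topShare_le_pref (M : ℕ) (σ : Equiv.Perm (Fin M) → ℝ) (hσ : ∀ r, 0 ≤ σ r)
    {i j : Fin M} (hj : j ≠ i) : topShare M σ i ≤ Pref M σ i j := by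
  unfold topShare Pref
  apply Finset.sum_le_sum
  intro r _
  by_cases h : (r i : ℕ) = 0
  · have hlt : r i < r j := by
      have : r j ≠ r i := fun he => hj (r.injective he)
      have : (r j : ℕ) ≠ 0 := by
        intro h0; exact this (Fin.ext (by omega))
      exact Fin.lt_def.mpr (by omega)
    simp [h, hlt]
  · simp only [if_neg h]
    exact mul_nonneg (hσ r) (by split <;> norm_num)

lemma topShare_nonneg (M : ℕ) (σ : Equiv.Perm (Fin M) → ℝ) (hσ : ∀ r, 0 ≤ σ r) (i : Fin M) :
    0 ≤ topShare M σ i := by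
  unfold topShare
  apply Finset.sum_nonneg
  intro r _
  split
  · exact hσ r
  · exact le_rfl

lemma sum_topShare (M : ℕ) (hM : 2 ≤ M) (σ : Equiv.Perm (Fin M) → ℝ)
    (hsum : ∑ r : Equiv.Perm (Fin M), σ r = 1) :
    ∑ i : Fin M, topShare M σ i = 1 := by
  unfold topShare
  rw [Finset.sum_comm]
  rw [← hsum]
  apply Finset.sum_congr rfl
  intro r _
  have h0 : (0 : ℕ) < M := by omega
  have : ∀ j : Fin M, ((r j : ℕ) = 0) ↔ j = r.symm ⟨0, h0⟩ := by
    intro j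
    rw [Equiv.eq_symm_apply]
    simp [Fin.ext_iff]
  simp only [this]
  rw [Finset.sum_ite_eq' univ (r.symm ⟨0, h0⟩)]
  simp

lemma minPref_nonneg (M : ℕ) (hM : 2 ≤ M) (σ : Equiv.Perm (Fin M) → ℝ) (hσ : ∀ r, 0 ≤ σ r)
    (i : Fin M) : topShare M σ i ≤ minPref M σ i :=
  le_minPref M hM σ i fun j hj => topShare_le_pref M σ hσ hj


/-- monotonicity of `Φ*`: moving mass `ε` from a supported
ranking `r̂` to a ranking `r'` that improves the position of `y_i` while
keeping the relative order of the other alternatives cannot decrease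
`Φ*(σ)(y_i)`. -/
theorem phiStar_monotone
    (M : ℕ) (hM : 2 ≤ M) (σ σ' : Equiv.Perm (Fin M) → ℝ) (hσ : IsProfile M σ)
    (i : Fin M) (rhat rnew : Equiv.Perm (Fin M)) (hpos : 0 < σ rhat)
    (himp : rnew i ≤ rhat i)
    (hoth : ∀ j k : Fin M, j ≠ i → k ≠ i → (rnew j < rnew k ↔ rhat j < rhat k))
    (ε : ℝ) (hε0 : 0 < ε) (hε1 : ε ≤ σ rhat)
    (hσ' : ∀ r, σ' r = σ r + (if r = rnew then ε else 0) - (if r = rhat then ε else 0)) :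
    PhiStar M σ i ≤ PhiStar M σ' i := by
  classical
  obtain ⟨hσpos, hσsum⟩ := hσ
  -- σ' is a profile
  have hσ'pos : ∀ r, 0 ≤ σ' r := by
    intro r
    rw [hσ' r]
    split_ifs with h1 h2 h2 <;>
      first
      | linarith [hσpos r]
      | (subst h2; linarith [hσpos r])
  have hσ'sum : ∑ r : Equiv.Perm (Fin M), σ' r = 1 := by
    simp only [hσ']
    rw [Finset.sum_sub_distrib, Finset.sum_add_distrib, Finset.sum_ite_eq' univ rnew,
      Finset.sum_ite_eq' univ rhat, hσsum]
    simp
  -- Pref comparison inequalities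
  have hPi : ∀ j, j ≠ i → Pref M σ i j ≤ Pref M σ' i j := by
    intro j hj
    rw [pref_shift M σ σ' rhat rnew ε hσ' i j]
    have : (if rhat i < rhat j then (1:ℝ) else 0) ≤ (if rnew i < rnew j then (1:ℝ) else 0) := by
      by_cases h : rhat i < rhat j
      · rw [if_pos h, if_pos (key_lt M i rhat rnew himp hoth hj h)]
      · rw [if_neg h]; positivity
    nlinarith
  have hPj : ∀ j k, j ≠ i → k ≠ j → Pref M σ' j k ≤ Pref M σ j k := by
    intro j k hj hk
    rcases eq_or_ne k i with hki | hki
    · rw [hki] at hk ⊢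
      rw [pref_shift M σ σ' rhat rnew ε hσ' j i]
      have : (if rnew j < rnew i then (1:ℝ) else 0) ≤ (if rhat j < rhat i then (1:ℝ) else 0) := by
        by_cases h : rnew j < rnew i
        · rw [if_pos h]
          have hji : rhat j ≠ rhat i := fun he => hj (rhat.injective he)
          have : rhat j < rhat i := by
            rcases lt_or_gt_of_ne hji with h' | h'
            · exact h'
            · exact absurd (key_lt M i rhat rnew himp hoth hj h') (asymm h)
          rw [if_pos this]
        · rw [if_neg h]
          split <;> norm_num
      nlinarith
    · rw [pref_shift M σ σ' rhat rnew ε hσ' j k,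
        if_congr (hoth j k hj hki) rfl rfl]
      linarith
  -- min preference facts
  have hui : minPref M σ i ≤ minPref M σ' i :=
    le_minPref M hM σ' i fun j hj => le_trans (minPref_le M σ hj) (hPi j hj)
  have huj : ∀ j, j ≠ i → minPref M σ' j ≤ minPref M σ j := by
    intro j hj
    obtain ⟨k, hk, he⟩ := minPref_exists M hM σ j
    rw [he]
    exact le_trans (minPref_le M σ' hk) (hPj j k hj hk)
  -- positivity of sums
  have hD : (1:ℝ) ≤ ∑ j : Fin M, minPref M σ j := by
    rw [← sum_topShare M hM σ hσsum]
    exact Finset.sum_le_sum fun j _ => minPref_nonneg M hM σ hσpos j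
  have hD' : (1:ℝ) ≤ ∑ j : Fin M, minPref M σ' j := by
    rw [← sum_topShare M hM σ' hσ'sum]
    exact Finset.sum_le_sum fun j _ => minPref_nonneg M hM σ' hσ'pos j
  have hu0 : 0 ≤ minPref M σ i :=
    le_trans (topShare_nonneg M σ hσpos i) (minPref_nonneg M hM σ hσpos i)
  have hu'0 : ∀ j, 0 ≤ minPref M σ' j := fun j =>
    le_trans (topShare_nonneg M σ' hσ'pos j) (minPref_nonneg M hM σ' hσ'pos j)
  -- split sums
  have hsplit : ∀ τ : Equiv.Perm (Fin M) → ℝ,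
      ∑ j : Fin M, minPref M τ j = minPref M τ i + ∑ j ∈ univ.erase i, minPref M τ j := by
    intro τ
    rw [Finset.add_sum_erase univ _ (mem_univ i)]
  have hs : ∑ j ∈ univ.erase i, minPref M σ' j ≤ ∑ j ∈ univ.erase i, minPref M σ j :=
    Finset.sum_le_sum fun j hj => huj j (Finset.ne_of_mem_erase hj)
  have hs0 : 0 ≤ ∑ j ∈ univ.erase i, minPref M σ' j :=
    Finset.sum_nonneg fun j _ => hu'0 j
  unfold PhiStar
  rw [div_le_div_iff₀ (by linarith) (by linarith)]
  rw [hsplit σ, hsplit σ']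
  have := mul_le_mul hui hs hs0 (le_trans hu0 hui)
  nlinarith [hu0, hui]
end
end

section
/- Let M = 3 and let σ be the profile placing mass 0.3 on (y_1 ≻ y_2 ≻ y_3), 0.1 on (y_2 ≻ y_3 ≻ y_1), 0.3 on (y_3 ≻ y_1 ≻ y_2), and 0.3 on (y_3 ≻ y_2 ≻ y_1). Then σ admits a PMC ranking r^σ with r^σ(y_3) < r^σ(y_1) < r^σ(y_2) (indeed P^σ(y_3 ≻ y_1) = 0.7, P^σ(y_3 ≻ y_2) = 0.6, P^σ(y_1 ≻ y_2) = 0.6 are all greater than 1/2), yet u_1 = 0.3 < 0.4 = u_2. Consequently, for every β ≥ 0 the softmax policy Φ^β(σ), with Φ^β(σ)(y_j) ∝ u_j·exp(β·u_j), satisfies Φ^β(σ)(y_1) < Φ^β(σ)(y_2), so Φ^β violates pairwise majority consistency for every finite β ≥ 0. -/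
open Finset

noncomputable section

open Equiv in
private lemma sum_perm3' (f : Equiv.Perm (Fin 3) → ℝ) :
    ∑ r : Equiv.Perm (Fin 3), f r =
      f 1 + f (finRotate 3) + f (finRotate 3)⁻¹ + f (swap 0 1) + f (swap 0 2) + f (swap 1 2) := by
  rw [show (univ : Finset (Equiv.Perm (Fin 3))) =
    {1, finRotate 3, (finRotate 3)⁻¹, swap 0 1, swap 0 2, swap 1 2} from by decide]
  rw [Finset.sum_insert (by decide), Finset.sum_insert (by decide), Finset.sum_insert (by decide),
    Finset.sum_insert (by decide), Finset.sum_insert (by decide), Finset.sum_singleton]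
  ring

private def sig : Equiv.Perm (Fin 3) → ℝ := fun r =>
  if r = (1 : Equiv.Perm (Fin 3)) then 0.3
  else if r = (finRotate 3)⁻¹ then 0.1
  else if r = finRotate 3 then 0.3
  else if r = Equiv.swap 0 2 then 0.3 else 0

private lemma p20 : Pref 3 sig 2 0 = 0.7 := by
  simp (config := { decide := true }) only [Pref, sig, sum_perm3']; norm_num
private lemma p21 : Pref 3 sig 2 1 = 0.6 := by
  simp (config := { decide := true }) only [Pref, sig, sum_perm3']; norm_num
private lemma p01 : Pref 3 sig 0 1 = 0.6 := by
  simp (config := { decide := true }) only [Pref, sig, sum_perm3']; norm_num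
private lemma p02 : Pref 3 sig 0 2 = 0.3 := by
  simp (config := { decide := true }) only [Pref, sig, sum_perm3']; norm_num
private lemma p10 : Pref 3 sig 1 0 = 0.4 := by
  simp (config := { decide := true }) only [Pref, sig, sum_perm3']; norm_num
private lemma p12 : Pref 3 sig 1 2 = 0.4 := by
  simp (config := { decide := true }) only [Pref, sig, sum_perm3']; norm_num

private lemma setEq (i a b : Fin 3) (ha : a ≠ i) (hb : b ≠ i)
    (h : ∀ j : Fin 3, j ≠ i → j = a ∨ j = b) :
    {x : ℝ | ∃ j, j ≠ i ∧ x = Pref 3 sig i j} = {Pref 3 sig i a, Pref 3 sig i b} := by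
  ext x
  simp only [Set.mem_setOf_eq, Set.mem_insert_iff, Set.mem_singleton_iff]
  constructor
  · rintro ⟨j, hj, rfl⟩
    rcases h j hj with rfl | rfl
    · exact Or.inl rfl
    · exact Or.inr rfl
  · rintro (rfl | rfl)
    exacts [⟨a, ha, rfl⟩, ⟨b, hb, rfl⟩]

private lemma mp0 : minPref 3 sig 0 = 0.3 := by
  rw [minPref, setEq 0 1 2 (by decide) (by decide) (by decide), csInf_pair, p01, p02]
  norm_num
private lemma mp1 : minPref 3 sig 1 = 0.4 := by
  rw [minPref, setEq 1 0 2 (by decide) (by decide) (by decide), csInf_pair, p10, p12]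
  norm_num
private lemma mp2 : minPref 3 sig 2 = 0.6 := by
  rw [minPref, setEq 2 0 1 (by decide) (by decide) (by decide), csInf_pair, p20, p21]
  norm_num

/-- the explicit `M = 3` profile admits a PMC ranking with
`y_3 ≻ y_1 ≻ y_2`, yet `u_1 = 0.3 < 0.4 = u_2`, so for every `β ≥ 0` the
softmax policy `Φ^β` puts less mass on `y_1` than on `y_2`: `Φ^β` violates
pairwise majority consistency for every finite `β`. -/
theorem softmax_violates_PMC :
    let σ : Equiv.Perm (Fin 3) → ℝ := fun r =>
      if r = (1 : Equiv.Perm (Fin 3)) then 0.3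
      else if r = (finRotate 3)⁻¹ then 0.1
      else if r = finRotate 3 then 0.3
      else if r = Equiv.swap 0 2 then 0.3 else 0
    (Pref 3 σ 2 0 = 0.7 ∧ Pref 3 σ 2 1 = 0.6 ∧ Pref 3 σ 0 1 = 0.6) ∧
    (∃ rσ : Equiv.Perm (Fin 3),
      (∀ i j : Fin 3, i ≠ j → (1 / 2 < Pref 3 σ i j ↔ rσ i < rσ j)) ∧
      rσ 2 < rσ 0 ∧ rσ 0 < rσ 1) ∧
    (minPref 3 σ 0 = 0.3 ∧ minPref 3 σ 1 = 0.4) ∧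
    ∀ β : ℝ, 0 ≤ β →
      minPref 3 σ 0 * Real.exp (β * minPref 3 σ 0)
          / (∑ m, minPref 3 σ m * Real.exp (β * minPref 3 σ m))
        < minPref 3 σ 1 * Real.exp (β * minPref 3 σ 1)
          / (∑ m, minPref 3 σ m * Real.exp (β * minPref 3 σ m)) := by
  intro σ
  have hσ : σ = sig := rfl
  rw [hσ]
  refine ⟨⟨p20, p21, p01⟩, ⟨finRotate 3, ?_, by decide, by decide⟩, ⟨mp0, mp1⟩, ?_⟩
  · have h01 : 1 / 2 < Pref 3 sig 0 1 ↔ (finRotate 3) 0 < (finRotate 3) 1 :=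
      ⟨fun _ => by decide, fun _ => by rw [p01]; norm_num⟩
    have h02 : 1 / 2 < Pref 3 sig 0 2 ↔ (finRotate 3) 0 < (finRotate 3) 2 :=
      ⟨fun h => absurd h (by rw [p02]; norm_num), fun h => absurd h (by decide)⟩
    have h10 : 1 / 2 < Pref 3 sig 1 0 ↔ (finRotate 3) 1 < (finRotate 3) 0 :=
      ⟨fun h => absurd h (by rw [p10]; norm_num), fun h => absurd h (by decide)⟩
    have h12 : 1 / 2 < Pref 3 sig 1 2 ↔ (finRotate 3) 1 < (finRotate 3) 2 :=
      ⟨fun h => absurd h (by rw [p12]; norm_num), fun h => absurd h (by decide)⟩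
    have h20 : 1 / 2 < Pref 3 sig 2 0 ↔ (finRotate 3) 2 < (finRotate 3) 0 :=
      ⟨fun _ => by decide, fun _ => by rw [p20]; norm_num⟩
    have h21 : 1 / 2 < Pref 3 sig 2 1 ↔ (finRotate 3) 2 < (finRotate 3) 1 :=
      ⟨fun _ => by decide, fun _ => by rw [p21]; norm_num⟩
    intro i j hij
    fin_cases i <;> fin_cases j <;>
      first
        | exact absurd rfl hij
        | exact h01 | exact h02 | exact h10 | exact h12 | exact h20 | exact h21
  · intro β hβ
    rw [Fin.sum_univ_three, mp0, mp1, mp2]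
    have e1 := Real.exp_pos (β * 0.3)
    have e2 := Real.exp_pos (β * 0.4)
    have e3 := Real.exp_pos (β * 0.6)
    have hle : Real.exp (β * 0.3) ≤ Real.exp (β * 0.4) :=
      Real.exp_le_exp.mpr (by nlinarith)
    have hD : (0 : ℝ) < 0.3 * Real.exp (β * 0.3) + 0.4 * Real.exp (β * 0.4)
        + 0.6 * Real.exp (β * 0.6) := by positivity
    rw [div_lt_div_iff_of_pos_right hD]
    nlinarith
end
end

section
/- Let σ be a profile over rankings of M alternatives that admits a PMC ranking r^σ, and let y* be the top alternative of r^σ (i.e., r^σ(y*) = 1). Then y* is a Condorcet winner (P^σ(y* ≻ y) > 1/2 for all y ≠ y*), y* is the unique maximizer of u, and the deterministic policy π with π(y*) = 1 and π(y) = 0 for y ≠ y* satisfies π(y_i) ≥ π(y_j) whenever r^σ(y_i) < r^σ(y_j); that is, the limiting policy Φ^∞ satisfies pairwise majority consistency. -/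
open Finset

noncomputable section

lemma Pref_nonneg (M : ℕ) (σ : Equiv.Perm (Fin M) → ℝ) (hσ : IsProfile M σ)
    (i j : Fin M) : 0 ≤ Pref M σ i j := by
  apply Finset.sum_nonneg
  intro r _
  have := hσ.1 r
  positivity

lemma Pref_add (M : ℕ) (σ : Equiv.Perm (Fin M) → ℝ) (hσ : IsProfile M σ)
    (i j : Fin M) (hij : i ≠ j) : Pref M σ i j + Pref M σ j i = 1 := by
  unfold Pref
  rw [← Finset.sum_add_distrib]
  have : ∀ r : Equiv.Perm (Fin M),
      σ r * (if r i < r j then (1:ℝ) else 0) + σ r * (if r j < r i then (1:ℝ) else 0)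
        = σ r := by
    intro r
    have hne : r i ≠ r j := fun h => hij (r.injective h)
    rcases lt_or_gt_of_ne hne with h | h
    · simp [h, not_lt_of_gt h]
    · simp [h, not_lt_of_gt h]
  rw [Finset.sum_congr rfl (fun r _ => this r)]
  exact hσ.2

/-- if `σ` admits a PMC ranking `r^σ` with top alternative `y*`,
then `y*` is a Condorcet winner and the unique maximizer of `u`, and the
deterministic policy on `y*` is ordered consistently with `r^σ`: the limiting
policy `Φ^∞` satisfies pairwise majority consistency. -/
theorem phiInfty_satisfies_PMC
    (M : ℕ) (hM : 2 ≤ M) (σ : Equiv.Perm (Fin M) → ℝ) (hσ : IsProfile M σ)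
    (rσ : Equiv.Perm (Fin M))
    (hpmc : ∀ i j : Fin M, i ≠ j → (1 / 2 < Pref M σ i j ↔ rσ i < rσ j))
    (ystar : Fin M) (hy : (rσ ystar : ℕ) = 0) :
    (∀ y, y ≠ ystar → 1 / 2 < Pref M σ ystar y) ∧
    (∀ j, j ≠ ystar → minPref M σ j < minPref M σ ystar) ∧
    (∀ i j : Fin M, rσ i < rσ j →
      (if j = ystar then (1 : ℝ) else 0) ≤ (if i = ystar then (1 : ℝ) else 0)) := by
  have hcond : ∀ y, y ≠ ystar → 1 / 2 < Pref M σ ystar y := by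
    intro y hne
    apply (hpmc ystar y (Ne.symm hne)).mpr
    have h0 : (rσ y : ℕ) ≠ 0 := by
      intro h
      exact hne (rσ.injective (Fin.ext (h.trans hy.symm)))
    rw [Fin.lt_def]
    omega
  refine ⟨hcond, ?_, ?_⟩
  · intro j hj
    have hbdd : ∀ k, BddBelow {x : ℝ | ∃ l, l ≠ k ∧ x = Pref M σ k l} := by
      intro k
      exact ⟨0, fun x ⟨l, _, hx⟩ => hx ▸ Pref_nonneg M σ hσ k l⟩
    have hmem : Pref M σ j ystar ∈ {x : ℝ | ∃ l, l ≠ j ∧ x = Pref M σ j l} :=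
      ⟨ystar, Ne.symm hj, rfl⟩
    have h1 : minPref M σ j ≤ Pref M σ j ystar := csInf_le (hbdd j) hmem
    have h2 : Pref M σ j ystar < 1 / 2 := by
      have := Pref_add M σ hσ ystar j (Ne.symm hj)
      have := hcond j hj
      linarith
    have hne2 : ∃ l : Fin M, l ≠ ystar := by
      have : 1 < Fintype.card (Fin M) := by simp; omega
      obtain ⟨l, hl⟩ := Fintype.exists_ne_of_one_lt_card this ystar
      exact ⟨l, hl⟩
    obtain ⟨l, hl⟩ := hne2
    have h3 : (1:ℝ) / 2 ≤ minPref M σ ystar := by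
      refine le_csInf ⟨Pref M σ ystar l, ⟨l, hl, rfl⟩⟩ ?_
      rintro x ⟨m, hm, rfl⟩
      exact (hcond m hm).le
    linarith
  · intro i j hij
    have hj : j ≠ ystar := by
      intro h
      subst h
      have h0 : (rσ i : ℕ) ≠ 0 := by omega
      omega
    simp [hj]
    split <;> norm_num
end
end
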